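/- Truncated second-moment series bound (Lemma 3(a)): Let X be a random variable in a sub-linear expectation space (Ω, ℋ, E), let V be the capacity generated by E, and suppose C_V[|X|] < ∞. Then Σ_{j=1}^∞ E[(|X| ∧ j)²]/j² ≤ 2 + 3·C_V[|X|] < ∞, where |X| ∧ j := min(|X|, j). -/

import Mathlib

open scoped BigOperators ENNReal
open Filter

/-- The class `C_{l,Lip}(ℝ^n)` of local-Lipschitz test functions:
`|φ(x) − φ(y)| ≤ C (1 + |x|^m + |y|^m) |x − y|` for some `C > 0` and `m ∈ ℕ`. -/
def CLLip {n : ℕ} (φ : (Fin n → ℝ) → ℝ) : Prop :=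
  ∃ C > (0:ℝ), ∃ m : ℕ, ∀ x y : Fin n → ℝ,
    |φ x - φ y| ≤ C * (1 + ‖x‖ ^ m + ‖y‖ ^ m) * ‖x - y‖

/-- A sub-linear expectation space `(Ω, ℋ, E)`: `ℋ` is a set of real random variables
containing the constants and stable under composition with `C_{l,Lip}` functions, and
`E : ℋ → [-∞, ∞]` is monotone, constant preserving, sub-additive (whenever the right-hand
side is not of the form `∞ - ∞`) and positively homogeneous. -/
structure SLE (Ω : Type*) where
  H : Set (Ω → ℝ)
  E : (Ω → ℝ) → EReal
  const_mem : ∀ c : ℝ, (fun _ => c) ∈ H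
  comp_mem : ∀ {n : ℕ} (X : Fin n → Ω → ℝ) (φ : (Fin n → ℝ) → ℝ),
      (∀ i, X i ∈ H) → CLLip φ → (fun ω => φ (fun i => X i ω)) ∈ H
  mono : ∀ {X Y : Ω → ℝ}, X ∈ H → Y ∈ H → (∀ ω, X ω ≤ Y ω) → E X ≤ E Y
  const_eq : ∀ c : ℝ, E (fun _ => c) = (c : EReal)
  subadd : ∀ {X Y : Ω → ℝ}, X ∈ H → Y ∈ H →
      ¬(E X = ⊤ ∧ E Y = ⊥) → ¬(E X = ⊥ ∧ E Y = ⊤) →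
      E (fun ω => X ω + Y ω) ≤ E X + E Y
  homog : ∀ {X : Ω → ℝ}, X ∈ H → ∀ l : ℝ, 0 ≤ l →
      E (fun ω => l * X ω) = (l : EReal) * E X

/-- The canonical map from `[-∞,∞]` to `[0,∞]` (faithful on nonnegative values). -/
noncomputable def erealToENNReal (x : EReal) : ℝ≥0∞ :=
  if x = ⊤ then ⊤ else ENNReal.ofReal x.toReal

namespace SLE

variable {Ω : Type*}

/-- The conjugate (lower) expectation `ℰ[X] := -E[-X]`. -/
noncomputable def cE (S : SLE Ω) (X : Ω → ℝ) : EReal := - S.E (fun ω => - X ω)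

/-- `Y` (an `n`-dimensional random vector) is independent to `X` (an `m`-dimensional
random vector) under the sub-linear expectation `E`:
`E[φ(X,Y)] = E[ E[φ(x,Y)]|_{x=X} ]` for every `φ ∈ C_{l,Lip}(ℝ^m × ℝ^n)` such that
`φ̄(x) := E[|φ(x,Y)|] < ∞` for every `x` and `E[|φ̄(X)|] < ∞`. -/
def IndepTo (S : SLE Ω) {m n : ℕ} (X : Fin m → Ω → ℝ) (Y : Fin n → Ω → ℝ) : Prop :=
  ∀ φ : (Fin (m + n) → ℝ) → ℝ, CLLip φ →
    (∀ x : Fin m → ℝ, S.E (fun ω' => |φ (Fin.append x (fun i => Y i ω'))|) ≠ ⊤) →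
    S.E (fun ω =>
      |(S.E (fun ω' => |φ (Fin.append (fun i => X i ω) (fun i => Y i ω'))|)).toReal|) ≠ ⊤ →
    S.E (fun ω => φ (Fin.append (fun i => X i ω) (fun i => Y i ω))) =
      S.E (fun ω => (S.E (fun ω' => φ (Fin.append (fun i => X i ω) (fun i => Y i ω')))).toReal)

/-- `Y` (an `n`-dimensional random vector) is negatively dependent to `X`
(an `m`-dimensional random vector) under the sub-linear expectation `E`:
`E[φ₁(X) φ₂(Y)] ≤ E[φ₁(X)] E[φ₂(Y)]` for every pair of test functions
`φ₁ ∈ C_{l,Lip}(ℝ^m)`, `φ₂ ∈ C_{l,Lip}(ℝ^n)` which are both coordinatewise nondecreasing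
or both coordinatewise nonincreasing, with `φ₁(X) ≥ 0`, `E[φ₂(Y)] ≥ 0` and
`E[|φ₁(X) φ₂(Y)|], E[|φ₁(X)|], E[|φ₂(Y)|] < ∞`. -/
def NegDepTo (S : SLE Ω) {m n : ℕ} (X : Fin m → Ω → ℝ) (Y : Fin n → Ω → ℝ) : Prop :=
  ∀ (φ₁ : (Fin m → ℝ) → ℝ) (φ₂ : (Fin n → ℝ) → ℝ), CLLip φ₁ → CLLip φ₂ →
    ((Monotone φ₁ ∧ Monotone φ₂) ∨ (Antitone φ₁ ∧ Antitone φ₂)) →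
    (∀ ω, 0 ≤ φ₁ (fun i => X i ω)) →
    0 ≤ S.E (fun ω => φ₂ (fun i => Y i ω)) →
    S.E (fun ω => |φ₁ (fun i => X i ω) * φ₂ (fun i => Y i ω)|) ≠ ⊤ →
    S.E (fun ω => |φ₁ (fun i => X i ω)|) ≠ ⊤ →
    S.E (fun ω => |φ₂ (fun i => Y i ω)|) ≠ ⊤ →
    S.E (fun ω => φ₁ (fun i => X i ω) * φ₂ (fun i => Y i ω)) ≤
      S.E (fun ω => φ₁ (fun i => X i ω)) * S.E (fun ω => φ₂ (fun i => Y i ω))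

/-- The capacity generated by a sub-linear expectation:
`V(A) := inf{E[ξ] : I_A ≤ ξ, ξ ∈ ℋ}`. -/
noncomputable def V (S : SLE Ω) (A : Set Ω) : EReal :=
  sInf (S.E '' {ξ | ξ ∈ S.H ∧ ∀ ω, A.indicator (fun _ => (1:ℝ)) ω ≤ ξ ω})

/-- The outer capacity `V*(A) := inf{Σ_n V(A_n) : A ⊆ ⋃_n A_n}`. -/
noncomputable def Vstar (S : SLE Ω) (A : Set Ω) : EReal :=
  sInf {x : EReal | ∃ B : ℕ → Set Ω, A ⊆ ⋃ i, B i ∧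
    x = ((∑' i, erealToENNReal (S.V (B i)) : ℝ≥0∞) : EReal)}

/-- The Choquet integral
`C_V[X] := ∫_0^∞ V(X ≥ t) dt + ∫_{-∞}^0 (V(X ≥ t) − 1) dt`. -/
noncomputable def choquet (S : SLE Ω) (X : Ω → ℝ) : EReal :=
  ((∫⁻ t in Set.Ioi (0:ℝ), erealToENNReal (S.V {ω | t ≤ X ω}) : ℝ≥0∞) : EReal)
    - ((∫⁻ t in Set.Iio (0:ℝ), erealToENNReal (1 - S.V {ω | t ≤ X ω}) : ℝ≥0∞) : EReal)

/-- A sequence `{X_n ; n ≥ 1}` is identically distributed: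
`E[φ(X_i)] = E[φ(X_1)]` for all `i ≥ 1` and `φ ∈ C_{l,Lip}(ℝ)`. -/
def IdentDistrib (S : SLE Ω) (X : ℕ → Ω → ℝ) : Prop :=
  ∀ i : ℕ, 1 ≤ i → ∀ φ : (Fin 1 → ℝ) → ℝ, CLLip φ →
    S.E (fun ω => φ (fun _ => X i ω)) = S.E (fun ω => φ (fun _ => X 1 ω))

/-- A sequence `{X_n ; n ≥ 1}` is negatively dependent:
`X_{i+1}` is negatively dependent to `(X_1, …, X_i)` for every `i ≥ 1`. -/
def NegDepSeq (S : SLE Ω) (X : ℕ → Ω → ℝ) : Prop :=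
  ∀ i : ℕ, 1 ≤ i →
    S.NegDepTo (fun j : Fin i => X ((j : ℕ) + 1)) (fun _ : Fin 1 => X (i + 1))

/-- A sequence `{X_n ; n ≥ 1}` is independent:
`X_{i+1}` is independent to `(X_1, …, X_i)` for every `i ≥ 1`. -/
def IndepSeq (S : SLE Ω) (X : ℕ → Ω → ℝ) : Prop :=
  ∀ i : ℕ, 1 ≤ i →
    S.IndepTo (fun j : Fin i => X ((j : ℕ) + 1)) (fun _ : Fin 1 => X (i + 1))

end SLE

section Aux

open Set MeasureTheory

lemma e2e_zero : erealToENNReal 0 = 0 := by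
  simp [erealToENNReal]

lemma e2e_coe (r : ℝ) : erealToENNReal (r : EReal) = ENNReal.ofReal r := by
  simp [erealToENNReal, EReal.toReal_coe]

lemma e2e_one : erealToENNReal 1 = 1 := by
  rw [show (1 : EReal) = ((1:ℝ) : EReal) by norm_num, e2e_coe, ENNReal.ofReal_one]

lemma e2e_mono {x y : EReal} (h : x ≤ y) : erealToENNReal x ≤ erealToENNReal y := by
  unfold erealToENNReal
  split_ifs with hx hy hy
  · exact le_rfl
  · exact absurd (top_le_iff.mp (hx ▸ h)) hy
  · exact le_top
  · rcases eq_or_ne x ⊥ with hb | hb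
    · simp [hb]
    · exact ENNReal.ofReal_le_ofReal (EReal.toReal_le_toReal h hb hy)

lemma e2e_ennreal (a : ℝ≥0∞) : erealToENNReal (a : EReal) = a := by
  cases a with
  | top => simp [erealToENNReal]
  | coe r =>
    rw [erealToENNReal, if_neg (by simp), EReal.toReal_coe_ennreal, ENNReal.ofReal_toReal (by simp)]

lemma e2e_toReal_nonneg {x : EReal} (hx : 0 ≤ x) : 0 ≤ x.toReal := by
  rcases eq_or_ne x ⊤ with h | h
  · simp [h]
  · have := EReal.toReal_le_toReal hx (by simp) h
    simpa using this

lemma e2e_add {x y : EReal} (hx : 0 ≤ x) (hy : 0 ≤ y) :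
    erealToENNReal (x + y) = erealToENNReal x + erealToENNReal y := by
  rcases eq_or_ne x ⊤ with hxt | hxt
  · subst hxt
    rw [EReal.top_add_of_ne_bot (by intro h; rw [h] at hy; exact absurd hy (by simp))]
    simp [erealToENNReal]
  rcases eq_or_ne y ⊤ with hyt | hyt
  · subst hyt
    rw [EReal.add_top_of_ne_bot (by intro h; rw [h] at hx; exact absurd hx (by simp))]
    simp [erealToENNReal]
  · have hxb : x ≠ ⊥ := by intro h; rw [h] at hx; exact absurd hx (by simp)
    have hyb : y ≠ ⊥ := by intro h; rw [h] at hy; exact absurd hy (by simp)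
    rw [← EReal.coe_toReal hxt hxb, ← EReal.coe_toReal hyt hyb, ← EReal.coe_add, e2e_coe,
      e2e_coe, e2e_coe, ENNReal.ofReal_add (e2e_toReal_nonneg hx) (e2e_toReal_nonneg hy)]

lemma e2e_mul (c : ℝ) (hc : 0 ≤ c) {x : EReal} (hx : 0 ≤ x) :
    erealToENNReal ((c : EReal) * x) = ENNReal.ofReal c * erealToENNReal x := by
  rcases hc.eq_or_lt with hc0 | hc0
  · subst hc0
    simp [e2e_zero]
  rcases eq_or_ne x ⊤ with hxt | hxt
  · subst hxt
    rw [EReal.mul_top_of_pos (by exact_mod_cast hc0)]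
    have hne : ENNReal.ofReal c ≠ 0 := by simp [ENNReal.ofReal_eq_zero, not_le, hc0]
    simp [erealToENNReal, ENNReal.mul_top hne]
  · have hxb : x ≠ ⊥ := by intro h; rw [h] at hx; exact absurd hx (by simp)
    rw [← EReal.coe_toReal hxt hxb, ← EReal.coe_mul, e2e_coe, e2e_coe,
      ENNReal.ofReal_mul hc]

end Aux
section Aux2

open Set MeasureTheory

variable {Ω : Type*} (S : SLE Ω)

lemma SLE.E_zero : S.E (fun _ => (0:ℝ)) = 0 := by
  rw [S.const_eq 0]; norm_num

lemma SLE.E_nonneg {f : Ω → ℝ} (hf : f ∈ S.H) (h : ∀ ω, 0 ≤ f ω) : 0 ≤ S.E f := by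
  have := S.mono (S.const_mem 0) hf h
  rwa [S.E_zero] at this

lemma SLE.E_ne_bot {f : Ω → ℝ} (hf : f ∈ S.H) (h : ∀ ω, 0 ≤ f ω) : S.E f ≠ ⊥ := by
  intro hb
  have := S.E_nonneg hf h
  rw [hb] at this
  simp at this

lemma SLE.V_nonneg (A : Set Ω) : 0 ≤ S.V A := by
  apply le_sInf
  rintro b ⟨ξ, ⟨hmem, hind⟩, rfl⟩
  exact S.E_nonneg hmem fun ω => le_trans (Set.indicator_nonneg (fun _ _ => zero_le_one) ω) (hind ω)

lemma SLE.V_le_one (A : Set Ω) : S.V A ≤ 1 := by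
  have h1 : S.E (fun _ => (1:ℝ)) = 1 := by rw [S.const_eq 1]; norm_num
  refine le_trans (sInf_le ⟨(fun _ => (1:ℝ)), ⟨S.const_mem 1, fun ω => ?_⟩, rfl⟩) h1.le
  classical
  by_cases hω : ω ∈ A <;> simp [Set.indicator_apply, hω]

lemma SLE.V_ne_top (A : Set Ω) : S.V A ≠ ⊤ :=
  fun h => by
  have h1 : (1 : EReal) ≠ ⊤ := by
    rw [show (1:EReal) = ((1:ℝ):EReal) by norm_num]
    exact EReal.coe_ne_top 1
  exact h1 (top_le_iff.mp (h ▸ S.V_le_one A))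

lemma SLE.V_ne_bot (A : Set Ω) : S.V A ≠ ⊥ :=
  fun h => absurd (h ▸ S.V_nonneg A) (by simp)

lemma SLE.V_mono {A B : Set Ω} (h : A ⊆ B) : S.V A ≤ S.V B := by
  apply le_sInf
  rintro b ⟨ξ, ⟨hmem, hind⟩, rfl⟩
  refine sInf_le ⟨ξ, ⟨hmem, fun ω => le_trans ?_ (hind ω)⟩, rfl⟩
  classical
  by_cases hω : ω ∈ A
  · simp [Set.indicator_apply, hω, h hω]
  · simp only [Set.indicator_apply, hω, if_false]
    by_cases hω' : ω ∈ B <;> simp [hω']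

lemma SLE.V_univ : S.V (Set.univ : Set Ω) = 1 := by
  refine le_antisymm (S.V_le_one _) (le_sInf ?_)
  rintro b ⟨ξ, ⟨hmem, hind⟩, rfl⟩
  have h1 : S.E (fun _ => (1:ℝ)) = 1 := by rw [S.const_eq 1]; norm_num
  rw [← h1]
  exact S.mono (S.const_mem 1) hmem fun ω => by simpa using hind ω

lemma norm_pi_sub_le {n : ℕ} (x y : Fin n → ℝ) (i : Fin n) : |x i - y i| ≤ ‖x - y‖ := by
  have := norm_le_pi_norm (x - y) i
  simpa [Real.norm_eq_abs] using this

lemma SLE.mem_add {f g : Ω → ℝ} (hf : f ∈ S.H) (hg : g ∈ S.H) :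
    (fun ω => f ω + g ω) ∈ S.H := by
  have h := S.comp_mem (n := 2) ![f, g] (fun x => x 0 + x 1)
    (by intro i; fin_cases i <;> simpa)
    ⟨1, one_pos, 0, fun x y => by
      have h0 := norm_pi_sub_le x y 0
      have h1 := norm_pi_sub_le x y 1
      have : |x 0 + x 1 - (y 0 + y 1)| ≤ |x 0 - y 0| + |x 1 - y 1| := by
        rw [show x 0 + x 1 - (y 0 + y 1) = (x 0 - y 0) + (x 1 - y 1) by ring]
        exact abs_add_le _ _
      calc |x 0 + x 1 - (y 0 + y 1)| ≤ |x 0 - y 0| + |x 1 - y 1| := this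
        _ ≤ ‖x - y‖ + ‖x - y‖ := add_le_add h0 h1
        _ ≤ 1 * (1 + ‖x‖ ^ 0 + ‖y‖ ^ 0) * ‖x - y‖ := by
            rw [pow_zero, pow_zero]
            nlinarith [norm_nonneg (x - y)]⟩
  simpa using h

lemma SLE.mem_smul (c : ℝ) {f : Ω → ℝ} (hf : f ∈ S.H) :
    (fun ω => c * f ω) ∈ S.H := by
  have h := S.comp_mem (n := 1) (fun _ => f) (fun x => c * x 0)
    (fun _ => hf)
    ⟨|c| + 1, by positivity, 0, fun x y => by
      have h0 := norm_pi_sub_le x y 0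
      calc |c * x 0 - c * y 0| = |c| * |x 0 - y 0| := by rw [← abs_mul]; ring_nf
        _ ≤ (|c| + 1) * ‖x - y‖ := by
            have := abs_nonneg (x 0 - y 0)
            nlinarith [abs_nonneg c, norm_nonneg (x - y)]
        _ ≤ (|c| + 1) * (1 + ‖x‖ ^ 0 + ‖y‖ ^ 0) * ‖x - y‖ := by
            rw [pow_zero, pow_zero]
            nlinarith [norm_nonneg (x - y), abs_nonneg c]⟩
  simpa using h

lemma SLE.mem_sum {ι : Type*} (s : Finset ι) (f : ι → Ω → ℝ) (h : ∀ k ∈ s, f k ∈ S.H) :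
    (fun ω => ∑ k ∈ s, f k ω) ∈ S.H := by
  classical
  induction s using Finset.induction with
  | empty => simpa using S.const_mem 0
  | insert _ _ ha ih =>
    rename_i a s'
    simp only [Finset.sum_insert ha]
    exact S.mem_add (h a (Finset.mem_insert_self a s'))
      (ih fun k hk => h k (Finset.mem_insert_of_mem hk))

lemma SLE.E_sum_le {ι : Type*} (s : Finset ι) (f : ι → Ω → ℝ)
    (hmem : ∀ k ∈ s, f k ∈ S.H) (hnn : ∀ k ∈ s, ∀ ω, 0 ≤ f k ω) :
    erealToENNReal (S.E (fun ω => ∑ k ∈ s, f k ω)) ≤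
      ∑ k ∈ s, erealToENNReal (S.E (f k)) := by
  classical
  induction s using Finset.induction with
  | empty => simp [S.E_zero, e2e_zero]
  | insert _ _ ha ih =>
    rename_i a s'
    have hfa : f a ∈ S.H := hmem a (Finset.mem_insert_self a s')
    have hrest : (fun ω => ∑ k ∈ s', f k ω) ∈ S.H :=
      S.mem_sum s' f fun k hk => hmem k (Finset.mem_insert_of_mem hk)
    have hfann : ∀ ω, 0 ≤ f a ω := hnn a (Finset.mem_insert_self a s')
    have hrestnn : ∀ ω, 0 ≤ ∑ k ∈ s', f k ω := fun ω =>
      Finset.sum_nonneg fun k hk => hnn k (Finset.mem_insert_of_mem hk) ω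
    have hsub := S.subadd hfa hrest
      (by rintro ⟨_, hb⟩; exact S.E_ne_bot hrest hrestnn hb)
      (by rintro ⟨hb, _⟩; exact S.E_ne_bot hfa hfann hb)
    have heq : (fun ω => ∑ k ∈ insert a s', f k ω) = (fun ω => f a ω + ∑ k ∈ s', f k ω) := by
      funext ω; rw [Finset.sum_insert ha]
    rw [heq, Finset.sum_insert ha]
    calc erealToENNReal (S.E (fun ω => f a ω + ∑ k ∈ s', f k ω))
        ≤ erealToENNReal (S.E (f a) + S.E (fun ω => ∑ k ∈ s', f k ω)) := e2e_mono hsub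
      _ = erealToENNReal (S.E (f a)) + erealToENNReal (S.E (fun ω => ∑ k ∈ s', f k ω)) :=
          e2e_add (S.E_nonneg hfa hfann) (S.E_nonneg hrest hrestnn)
      _ ≤ _ := add_le_add le_rfl (ih (fun k hk => hmem k (Finset.mem_insert_of_mem hk))
          (fun k hk => hnn k (Finset.mem_insert_of_mem hk)))

end Aux2
section Aux3

open Set MeasureTheory

variable {Ω : Type*}

lemma sum_odd_sq (n : ℕ) : ∑ k ∈ Finset.range n, (2*(k:ℝ)+1) = (n:ℝ)^2 := by
  induction n with
  | zero => simp
  | succ n ih =>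
    rw [Finset.sum_range_succ, ih]
    push_cast
    ring

lemma SLE.keybound (S : SLE Ω) (X : Ω → ℝ) (hX : X ∈ S.H) (i : ℕ) :
    erealToENNReal (S.E (fun ω => (min (|X ω|) ((i:ℝ)+1))^2)) ≤
      ∑ k ∈ Finset.range (i+1),
        ENNReal.ofReal (2*(k:ℝ)+1) * erealToENNReal (S.V {ω | (k:ℝ) ≤ |X ω|}) := by
  classical
  -- membership of the truncated square
  have hY : (fun ω => (min (|X ω|) ((i:ℝ)+1))^2) ∈ S.H := by
    have h := S.comp_mem (n := 1) (fun _ => X) (fun x => (min (|x 0|) ((i:ℝ)+1))^2)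
      (fun _ => hX)
      ⟨2*((i:ℝ)+1)+1, by positivity, 0, fun x y => by
        set jr : ℝ := (i:ℝ)+1 with hjr
        have hjr1 : (1:ℝ) ≤ jr := by rw [hjr]; linarith [Nat.cast_nonneg (α := ℝ) i]
        set a : ℝ := min (|x 0|) jr with hadef
        set b : ℝ := min (|y 0|) jr with hbdef
        have ha0 : 0 ≤ a := le_min (abs_nonneg _) (by linarith)
        have hb0 : 0 ≤ b := le_min (abs_nonneg _) (by linarith)
        have haj : a ≤ jr := min_le_right _ _
        have hbj : b ≤ jr := min_le_right _ _
        have hab : |a - b| ≤ |x 0 - y 0| := by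
          have h1 := abs_min_sub_min_le_max (|x 0|) jr (|y 0|) jr
          have h2 : max |(|x 0|) - (|y 0|)| |jr - jr| = |(|x 0|) - (|y 0|)| := by
            simp [abs_nonneg]
          have h3 := abs_abs_sub_abs_le_abs_sub (x 0) (y 0)
          rw [h2] at h1
          exact le_trans h1 h3
        have hxy := norm_pi_sub_le x y 0
        have hsq : |a^2 - b^2| = |a + b| * |a - b| := by
          rw [← abs_mul]; ring_nf
        have habs : |a + b| ≤ 2 * jr := by
          rw [abs_of_nonneg (by linarith)]; linarith
        have key : |a^2 - b^2| ≤ 2 * jr * ‖x - y‖ := by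
          rw [hsq]
          have h4 : |a - b| ≤ ‖x - y‖ := le_trans hab hxy
          have := abs_nonneg (a - b)
          nlinarith [norm_nonneg (x - y)]
        calc |a^2 - b^2| ≤ 2 * jr * ‖x - y‖ := key
          _ ≤ (2*jr+1) * (1 + ‖x‖ ^ 0 + ‖y‖ ^ 0) * ‖x - y‖ := by
              rw [pow_zero, pow_zero]
              nlinarith [norm_nonneg (x - y)]⟩
    simpa using h
  set j : ℕ := i + 1 with hjdef
  have hjcast : ((j:ℝ)) = (i:ℝ) + 1 := by push_cast [hjdef]; ring
  apply ENNReal.le_of_forall_pos_le_add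
  intro ε hε _
  have hεR : (0:ℝ) < (ε:ℝ) := by exact_mod_cast hε
  set δ : ℝ := (ε:ℝ) / (2*(j:ℝ)^2) with hδdef
  have hj0 : (0:ℝ) < (j:ℝ) := by rw [hjcast]; positivity
  have hδ : 0 < δ := by positivity
  -- choose near-optimal dominating functions
  have hchoice : ∀ k : ℕ, ∃ ξ, (ξ ∈ S.H ∧
      ∀ ω, ({ω' | (k:ℝ) ≤ |X ω'|}).indicator (fun _ => (1:ℝ)) ω ≤ ξ ω) ∧
      S.E ξ ≤ S.V {ω' | (k:ℝ) ≤ |X ω'|} + (δ:EReal) := by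
    intro k
    set A := {ω' | (k:ℝ) ≤ |X ω'|} with hA
    have hVlt : S.V A < S.V A + (δ:EReal) := by
      conv_lhs => rw [← EReal.coe_toReal (S.V_ne_top A) (S.V_ne_bot A)]
      conv_rhs => rw [← EReal.coe_toReal (S.V_ne_top A) (S.V_ne_bot A)]
      rw [← EReal.coe_add]
      exact EReal.coe_lt_coe_iff.mpr (by linarith)
    rw [SLE.V] at hVlt
    obtain ⟨b, hb, hblt⟩ := sInf_lt_iff.mp hVlt
    obtain ⟨ξ, hξ, rfl⟩ := hb
    exact ⟨ξ, ⟨hξ.1, hξ.2⟩, hblt.le⟩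
  choose ξ hξ hE using hchoice
  have hmem : ∀ k, ξ k ∈ S.H := fun k => (hξ k).1
  have hξnn : ∀ k ω, 0 ≤ ξ k ω := fun k ω =>
    le_trans (Set.indicator_nonneg (fun _ _ => zero_le_one) ω) ((hξ k).2 ω)
  -- pointwise domination
  have hpt : ∀ ω, (min (|X ω|) ((i:ℝ)+1))^2 ≤ ∑ k ∈ Finset.range j, (2*(k:ℝ)+1) * ξ k ω := by
    intro ω
    set a : ℝ := min (|X ω|) ((i:ℝ)+1) with hadef
    have ha0 : 0 ≤ a := le_min (abs_nonneg _) (by positivity)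
    have haj : a ≤ (j:ℝ) := by rw [hjcast]; exact min_le_right _ _
    set m : ℕ := min j (Nat.floor a + 1) with hmdef
    have ham : a ≤ (m:ℝ) := by
      rw [hmdef, Nat.cast_min]
      refine le_min haj ?_
      have := Nat.lt_floor_add_one a
      push_cast
      linarith
    have hmj : m ≤ j := min_le_left _ _
    have hklt : ∀ k, k < m → (k:ℝ) ≤ |X ω| := by
      intro k hk
      have hm2 : m ≤ Nat.floor a + 1 := min_le_right _ _
      have hk' : k ≤ Nat.floor a := by omega
      have h1 : (k:ℝ) ≤ (Nat.floor a : ℝ) := by exact_mod_cast hk'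
      have h2 : (Nat.floor a : ℝ) ≤ a := Nat.floor_le ha0
      exact le_trans (le_trans h1 h2) (min_le_left _ _)
    have h1 : ∀ k ∈ Finset.range m, (2*(k:ℝ)+1) * 1 ≤ (2*(k:ℝ)+1) * ξ k ω := by
      intro k hk
      have hk' := Finset.mem_range.mp hk
      have hmemA : ω ∈ {ω' | (k:ℝ) ≤ |X ω'|} := hklt k hk'
      have hiω : ({ω' | (k:ℝ) ≤ |X ω'|}).indicator (fun _ => (1:ℝ)) ω = 1 :=
        Set.indicator_of_mem hmemA _
      have hξ1 : (1:ℝ) ≤ ξ k ω := by rw [← hiω]; exact (hξ k).2 ω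
      have hc : (0:ℝ) ≤ 2*(k:ℝ)+1 := by positivity
      nlinarith
    calc a^2 ≤ (m:ℝ)^2 := by nlinarith
      _ = ∑ k ∈ Finset.range m, (2*(k:ℝ)+1) := (sum_odd_sq m).symm
      _ = ∑ k ∈ Finset.range m, (2*(k:ℝ)+1) * 1 := by simp
      _ ≤ ∑ k ∈ Finset.range m, (2*(k:ℝ)+1) * ξ k ω := Finset.sum_le_sum h1
      _ ≤ ∑ k ∈ Finset.range j, (2*(k:ℝ)+1) * ξ k ω :=
          Finset.sum_le_sum_of_subset_of_nonneg (Finset.range_subset_range.mpr hmj)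
            (fun k _ _ => mul_nonneg (by positivity) (hξnn k ω))
  -- expectation chain
  have hsmem : ∀ k ∈ Finset.range j, (fun ω => (2*(k:ℝ)+1) * ξ k ω) ∈ S.H :=
    fun k _ => S.mem_smul _ (hmem k)
  have hstep1 : S.E (fun ω => (min (|X ω|) ((i:ℝ)+1))^2) ≤
      S.E (fun ω => ∑ k ∈ Finset.range j, (2*(k:ℝ)+1) * ξ k ω) :=
    S.mono hY (S.mem_sum _ _ hsmem) hpt
  have hstep2 := S.E_sum_le (Finset.range j) (fun k ω => (2*(k:ℝ)+1) * ξ k ω) hsmem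
    (fun k _ ω => mul_nonneg (by positivity) (hξnn k ω))
  have hstep3 : ∀ k ∈ Finset.range j,
      erealToENNReal (S.E (fun ω => (2*(k:ℝ)+1) * ξ k ω)) ≤
        ENNReal.ofReal (2*(k:ℝ)+1) *
          (erealToENNReal (S.V {ω' | (k:ℝ) ≤ |X ω'|}) + ENNReal.ofReal δ) := by
    intro k _
    rw [S.homog (hmem k) _ (by positivity),
      e2e_mul _ (by positivity) (S.E_nonneg (hmem k) (hξnn k))]
    refine mul_le_mul_right ?_ _
    calc erealToENNReal (S.E (ξ k)) ≤
        erealToENNReal (S.V {ω' | (k:ℝ) ≤ |X ω'|} + (δ:EReal)) := e2e_mono (hE k)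
      _ = _ := by
          rw [e2e_add (S.V_nonneg _) (by exact_mod_cast hδ.le), e2e_coe]
  have hδsum : ∑ k ∈ Finset.range j, ENNReal.ofReal (2*(k:ℝ)+1) * ENNReal.ofReal δ ≤ (ε:ℝ≥0∞) := by
    have heq : ∀ k ∈ Finset.range j, ENNReal.ofReal (2*(k:ℝ)+1) * ENNReal.ofReal δ
        = ENNReal.ofReal ((2*(k:ℝ)+1) * δ) :=
      fun k _ => (ENNReal.ofReal_mul (by positivity)).symm
    rw [Finset.sum_congr rfl heq,
      ← ENNReal.ofReal_sum_of_nonneg (fun k _ => by positivity),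
      ← Finset.sum_mul, sum_odd_sq]
    have : (j:ℝ)^2 * δ ≤ (ε:ℝ) := by
      rw [hδdef]
      rw [div_eq_inv_mul]
      have h2 : (j:ℝ)^2 * ((2*(j:ℝ)^2)⁻¹ * (ε:ℝ)) = (ε:ℝ)/2 := by
        field_simp
      rw [h2]
      linarith
    calc ENNReal.ofReal ((j:ℝ)^2 * δ) ≤ ENNReal.ofReal (ε:ℝ) := ENNReal.ofReal_le_ofReal this
      _ = (ε:ℝ≥0∞) := ENNReal.ofReal_coe_nnreal
  calc erealToENNReal (S.E (fun ω => (min (|X ω|) ((i:ℝ)+1))^2))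
      ≤ erealToENNReal (S.E (fun ω => ∑ k ∈ Finset.range j, (2*(k:ℝ)+1) * ξ k ω)) :=
        e2e_mono hstep1
    _ ≤ ∑ k ∈ Finset.range j, erealToENNReal (S.E (fun ω => (2*(k:ℝ)+1) * ξ k ω)) := hstep2
    _ ≤ ∑ k ∈ Finset.range j, ENNReal.ofReal (2*(k:ℝ)+1) *
          (erealToENNReal (S.V {ω' | (k:ℝ) ≤ |X ω'|}) + ENNReal.ofReal δ) :=
        Finset.sum_le_sum hstep3
    _ = (∑ k ∈ Finset.range j, ENNReal.ofReal (2*(k:ℝ)+1) *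
          erealToENNReal (S.V {ω' | (k:ℝ) ≤ |X ω'|}))
        + ∑ k ∈ Finset.range j, ENNReal.ofReal (2*(k:ℝ)+1) * ENNReal.ofReal δ := by
        rw [← Finset.sum_add_distrib]
        exact Finset.sum_congr rfl fun k _ => mul_add _ _ _
    _ ≤ _ := add_le_add le_rfl hδsum

end Aux3
section Aux4

open Set MeasureTheory

variable {Ω : Type*}

lemma SLE.choquet_abs_eq (S : SLE Ω) (X : Ω → ℝ) :
    S.choquet (fun ω => |X ω|) =
      ((∫⁻ t in Set.Ioi (0:ℝ), erealToENNReal (S.V {ω | t ≤ |X ω|}) : ℝ≥0∞) : EReal) := by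
  rw [SLE.choquet]
  have h0 : (∫⁻ t in Set.Iio (0:ℝ),
      erealToENNReal (1 - S.V {ω | t ≤ |X ω|}) : ℝ≥0∞) = 0 := by
    rw [setLIntegral_congr_fun measurableSet_Iio
      (fun t ht => ?_), lintegral_zero]
    have huniv : {ω | t ≤ |X ω|} = Set.univ :=
      Set.eq_univ_of_forall fun ω => by
        simp only [Set.mem_setOf_eq]
        exact le_trans (le_of_lt ht) (abs_nonneg _)
    rw [huniv, S.V_univ]
    rw [show (1:EReal) = ((1:ℝ):EReal) by norm_num, ← EReal.coe_sub]
    norm_num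
    exact e2e_zero
  rw [h0, EReal.coe_ennreal_zero, sub_zero]

lemma u_eq_ofReal (n : ℕ) :
    ((((n:ℝ≥0∞)+1)^2)⁻¹ : ℝ≥0∞) = ENNReal.ofReal ((((n:ℝ)+1)^2)⁻¹) := by
  have h1 : ((n:ℝ≥0∞)+1) = ENNReal.ofReal ((n:ℝ)+1) := by
    rw [ENNReal.ofReal_add (Nat.cast_nonneg n) zero_le_one, ENNReal.ofReal_natCast,
      ENNReal.ofReal_one]
  rw [h1, ← ENNReal.ofReal_pow (by positivity), ← ENNReal.ofReal_inv_of_pos (by positivity)]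

lemma g_summable : Summable (fun n : ℕ => (((n:ℝ)+1)^2)⁻¹) := by
  have h := Real.summable_one_div_nat_pow.mpr (show 1 < 2 by norm_num)
  have h2 := (summable_nat_add_iff 1).mpr h
  refine h2.congr fun n => ?_
  push_cast
  rw [one_div]

lemma tail_le (k : ℕ) :
    (∑' t : ℕ, ((((t+1+k : ℕ):ℝ≥0∞)+1)^2)⁻¹) ≤ ENNReal.ofReal (((k:ℝ)+1)⁻¹) := by
  have hsum : Summable (fun t : ℕ => ((((t+1+k : ℕ):ℝ)+1)^2)⁻¹) := by
    have := (summable_nat_add_iff (1+k)).mpr g_summable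
    refine this.congr fun t => ?_
    congr 2
    push_cast
    ring
  calc (∑' t : ℕ, ((((t+1+k : ℕ):ℝ≥0∞)+1)^2)⁻¹)
      = ∑' t : ℕ, ENNReal.ofReal (((((t+1+k : ℕ):ℝ)+1)^2)⁻¹) := by
        exact tsum_congr fun t => u_eq_ofReal (t+1+k)
    _ = ENNReal.ofReal (∑' t : ℕ, ((((t+1+k : ℕ):ℝ)+1)^2)⁻¹) :=
        (ENNReal.ofReal_tsum_of_nonneg (fun t => by positivity) hsum).symm
    _ ≤ ENNReal.ofReal (((k:ℝ)+1)⁻¹) := by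
        apply ENNReal.ofReal_le_ofReal
        apply hsum.tsum_le_of_sum_range_le
        intro N
        set F : ℕ → ℝ := fun t => ((t:ℝ)+(k:ℝ)+1)⁻¹ with hF
        have hterm : ∀ t ∈ Finset.range N,
            ((((t+1+k : ℕ):ℝ)+1)^2)⁻¹ ≤ F t - F (t+1) := by
          intro t _
          set b : ℝ := (t:ℝ)+(k:ℝ) with hb
          have hb0 : (0:ℝ) ≤ b := by positivity
          have hcast : (((t+1+k : ℕ):ℝ)+1) = b + 2 := by push_cast [hb]; ring
          have hF1 : F t = (b+1)⁻¹ := by simp [hF, hb]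
          have hF2 : F (t+1) = (b+2)⁻¹ := by rw [hF]; push_cast [hb]; ring_nf
          rw [hcast, hF1, hF2]
          have hsub : (b+1)⁻¹ - (b+2)⁻¹ = ((b+1)*(b+2))⁻¹ := by
            rw [inv_sub_inv (by positivity) (by positivity)]
            rw [show (b+2)-(b+1) = 1 by ring, one_div]
          rw [hsub]
          apply inv_anti₀ (by positivity)
          nlinarith
        calc ∑ t ∈ Finset.range N, ((((t+1+k : ℕ):ℝ)+1)^2)⁻¹
            ≤ ∑ t ∈ Finset.range N, (F t - F (t+1)) := Finset.sum_le_sum hterm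
          _ = F 0 - F N := Finset.sum_range_sub' F N
          _ ≤ F 0 := by
              have : (0:ℝ) ≤ F N := by rw [hF]; positivity
              linarith
          _ = ((k:ℝ)+1)⁻¹ := by rw [hF]; norm_num

lemma coeff_le (k : ℕ) :
    ENNReal.ofReal (2*(k:ℝ)+1) * (((((k:ℝ≥0∞)+1)^2)⁻¹) + ENNReal.ofReal (((k:ℝ)+1)⁻¹))
      ≤ if k = 0 then 2 else 3 := by
  rw [u_eq_ofReal k, ← ENNReal.ofReal_add (by positivity) (by positivity),
    ← ENNReal.ofReal_mul (by positivity)]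
  rcases Nat.eq_zero_or_pos k with hk | hk
  · subst hk
    norm_num
  · rw [if_neg (by omega)]
    have hK : (1:ℝ) ≤ (k:ℝ) := by exact_mod_cast hk
    have h3 : (2*(k:ℝ)+1) * (((((k:ℝ)+1)^2)⁻¹) + ((k:ℝ)+1)⁻¹) ≤ 3 := by
      set K : ℝ := (k:ℝ) with hKdef
      have hK1 : (0:ℝ) < K + 1 := by linarith
      set c : ℝ := (K+1)⁻¹ with hc
      have hc0 : 0 < c := by positivity
      have hc1 : c * (K+1) = 1 := inv_mul_cancel₀ (by linarith)
      have hcsq : (((K:ℝ)+1)^2)⁻¹ = c^2 := by rw [hc]; rw [sq, sq, mul_inv]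
      rw [hcsq]
      have hchalf : c ≤ 1 := by
        rw [hc]
        have : (1:ℝ) ≤ K + 1 := by linarith
        exact inv_le_one_of_one_le₀ this
      nlinarith
    calc ENNReal.ofReal ((2*(k:ℝ)+1) * (((((k:ℝ)+1)^2)⁻¹) + ((k:ℝ)+1)⁻¹))
        ≤ ENNReal.ofReal 3 := ENNReal.ofReal_le_ofReal h3
      _ = 3 := ENNReal.ofReal_ofNat 3

end Aux4

/-- **Truncated second-moment series bound (Lemma 3(a)).**
If `X ∈ ℋ` and `C_V[|X|] < ∞`, then
`Σ_{j=1}^∞ E[(|X| ∧ j)²]/j² ≤ 2 + 3 C_V[|X|] < ∞` (the series being indexed below by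
`j = i + 1`, `i ∈ ℕ`, so that `j` ranges over `1, 2, 3, …`). -/
theorem truncated_second_moment_series_bound {Ω : Type*} (S : SLE Ω) (X : Ω → ℝ)
    (hX : X ∈ S.H)
    (hChoquet : S.choquet (fun ω => |X ω|) < ⊤) :
    (∑' i : ℕ, erealToENNReal (S.E (fun ω => (min (|X ω|) ((i : ℝ) + 1)) ^ 2))
        / ((i : ℝ≥0∞) + 1) ^ 2)
      ≤ 2 + 3 * erealToENNReal (S.choquet (fun ω => |X ω|)) ∧
    (∑' i : ℕ, erealToENNReal (S.E (fun ω => (min (|X ω|) ((i : ℝ) + 1)) ^ 2))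
        / ((i : ℝ≥0∞) + 1) ^ 2) < ⊤ := by
  classical
  open MeasureTheory in
  set I : ℝ≥0∞ := ∫⁻ t in Set.Ioi (0:ℝ), erealToENNReal (S.V {ω | t ≤ |X ω|}) with hIdef
  have hch : S.choquet (fun ω => |X ω|) = (I : EReal) := by
    rw [hIdef]; exact S.choquet_abs_eq X
  have hIne : I ≠ ⊤ := by
    intro h
    rw [hch, h] at hChoquet
    exact absurd hChoquet (by simp)
  have he2e : erealToENNReal (S.choquet (fun ω => |X ω|)) = I := by rw [hch, e2e_ennreal]
  rw [he2e]
  -- the union decomposition of (0,∞)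
  have hunion : Set.Ioi (0:ℝ) = ⋃ t : ℕ, Set.Ioc (t:ℝ) ((t:ℝ)+1) := by
    ext x
    simp only [Set.mem_Ioi, Set.mem_iUnion, Set.mem_Ioc]
    constructor
    · intro hx
      have h1 : 1 ≤ ⌈x⌉₊ := Nat.one_le_ceil_iff.mpr hx
      refine ⟨⌈x⌉₊ - 1, Nat.lt_ceil.mp (by omega), ?_⟩
      have h2 : ((⌈x⌉₊ - 1 : ℕ):ℝ) + 1 = (⌈x⌉₊:ℝ) := by
        have h3 : (⌈x⌉₊ - 1) + 1 = ⌈x⌉₊ := by omega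
        exact_mod_cast congrArg (fun n : ℕ => (n:ℝ)) h3
      rw [h2]
      exact Nat.le_ceil x
    · rintro ⟨t, h1, _⟩
      exact lt_of_le_of_lt (Nat.cast_nonneg t) h1
  have hdisj : Pairwise (Function.onFun Disjoint fun t : ℕ => Set.Ioc (t:ℝ) ((t:ℝ)+1)) := by
    intro a b hab
    refine Set.disjoint_left.mpr ?_
    rintro x ⟨ha1, ha2⟩ ⟨hb1, hb2⟩
    have h1' : a < b + 1 := by exact_mod_cast lt_of_lt_of_le ha1 hb2
    have h2' : b < a + 1 := by exact_mod_cast lt_of_lt_of_le hb1 ha2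
    exact hab (by omega)
  -- tail of the capacities is dominated by the Choquet integral
  have hwI : (∑' t : ℕ, erealToENNReal (S.V {ω | ((t+1:ℕ):ℝ) ≤ |X ω|})) ≤ I := by
    have hI2 : I = ∑' t : ℕ, ∫⁻ s in Set.Ioc (t:ℝ) ((t:ℝ)+1),
        erealToENNReal (S.V {ω | s ≤ |X ω|}) := by
      rw [hIdef, hunion, lintegral_iUnion (fun t => measurableSet_Ioc) hdisj]
    rw [hI2]
    refine ENNReal.tsum_le_tsum fun t => ?_
    have hvol : MeasureTheory.volume (Set.Ioc (t:ℝ) ((t:ℝ)+1)) = 1 := by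
      rw [Real.volume_Ioc]; simp
    calc erealToENNReal (S.V {ω | ((t+1:ℕ):ℝ) ≤ |X ω|})
        = erealToENNReal (S.V {ω | ((t+1:ℕ):ℝ) ≤ |X ω|}) *
            MeasureTheory.volume (Set.Ioc (t:ℝ) ((t:ℝ)+1)) := by rw [hvol, mul_one]
      _ = ∫⁻ _ in Set.Ioc (t:ℝ) ((t:ℝ)+1),
            erealToENNReal (S.V {ω | ((t+1:ℕ):ℝ) ≤ |X ω|}) :=
          (setLIntegral_const _ _).symm
      _ ≤ ∫⁻ s in Set.Ioc (t:ℝ) ((t:ℝ)+1), erealToENNReal (S.V {ω | s ≤ |X ω|}) := by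
          refine setLIntegral_mono' measurableSet_Ioc fun s hs => ?_
          refine e2e_mono (S.V_mono fun ω hω => ?_)
          simp only [Set.mem_setOf_eq] at hω ⊢
          have hcast : ((t+1:ℕ):ℝ) = (t:ℝ)+1 := by push_cast; ring
          have hs2 : s ≤ ((t+1:ℕ):ℝ) := by rw [hcast]; exact hs.2
          exact le_trans hs2 hω
  -- value at zero
  have hw0 : erealToENNReal (S.V {ω | ((0:ℕ):ℝ) ≤ |X ω|}) = 1 := by
    have huniv : {ω | ((0:ℕ):ℝ) ≤ |X ω|} = Set.univ :=
      Set.eq_univ_of_forall fun ω => by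
        simp only [Set.mem_setOf_eq, Nat.cast_zero]
        exact abs_nonneg _
    rw [huniv, S.V_univ, e2e_one]
  -- the main bound
  have main : (∑' i : ℕ, erealToENNReal (S.E (fun ω => (min (|X ω|) ((i : ℝ) + 1)) ^ 2))
      / ((i : ℝ≥0∞) + 1) ^ 2) ≤ 2 + 3 * I := by
    have hstep : ∀ i : ℕ, erealToENNReal (S.E (fun ω => (min (|X ω|) ((i : ℝ) + 1)) ^ 2))
        / ((i : ℝ≥0∞) + 1) ^ 2
        ≤ ∑' k : ℕ, (if k ≤ i then
            ENNReal.ofReal (2*(k:ℝ)+1) * erealToENNReal (S.V {ω | (k:ℝ) ≤ |X ω|})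
              * (((i:ℝ≥0∞)+1)^2)⁻¹ else 0) := by
      intro i
      refine le_trans (ENNReal.div_le_div_right (S.keybound X hX i) _) (le_of_eq ?_)
      rw [div_eq_mul_inv, Finset.sum_mul, sum_eq_tsum_indicator]
      refine tsum_congr fun k => ?_
      by_cases hk : k ≤ i
      · rw [Set.indicator_of_mem (by simp [Nat.lt_succ_iff, hk]), if_pos hk]
      · rw [Set.indicator_of_notMem (by simp [Nat.lt_succ_iff, hk]), if_neg hk]
    refine le_trans (ENNReal.tsum_le_tsum hstep) ?_
    rw [ENNReal.tsum_comm]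
    -- inner sums
    have hA : ∀ k : ℕ, (∑' i : ℕ, (if k ≤ i then (((i:ℝ≥0∞)+1)^2)⁻¹ else 0))
        ≤ (((k:ℝ≥0∞)+1)^2)⁻¹ + ENNReal.ofReal (((k:ℝ)+1)⁻¹) := by
      intro k
      have hsupp : Function.support (fun i : ℕ => if k ≤ i then (((i:ℝ≥0∞)+1)^2)⁻¹ else 0)
          ⊆ Set.range (fun t : ℕ => t + k) := by
        intro i hi
        rcases le_or_gt k i with h | h
        · exact ⟨i - k, show i - k + k = i from Nat.sub_add_cancel h⟩
        · simp only [Function.mem_support, if_neg (not_le.mpr h)] at hi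
          exact absurd rfl hi
      have hshift : (∑' i : ℕ, (if k ≤ i then (((i:ℝ≥0∞)+1)^2)⁻¹ else 0))
          = ∑' t : ℕ, ((((t+k : ℕ):ℝ≥0∞)+1)^2)⁻¹ := by
        rw [← Function.Injective.tsum_eq (add_left_injective k) hsupp]
        exact tsum_congr fun t => if_pos (Nat.le_add_left k t)
      rw [hshift, tsum_eq_zero_add' ENNReal.summable]
      refine add_le_add (le_of_eq ?_) (tail_le k)
      norm_num
    have hterm : ∀ k : ℕ,
        (∑' i : ℕ, (if k ≤ i then
            ENNReal.ofReal (2*(k:ℝ)+1) * erealToENNReal (S.V {ω | (k:ℝ) ≤ |X ω|})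
              * (((i:ℝ≥0∞)+1)^2)⁻¹ else 0))
          ≤ (if k = 0 then 2 else 3) * erealToENNReal (S.V {ω | (k:ℝ) ≤ |X ω|}) := by
      intro k
      have hfac : (∑' i : ℕ, (if k ≤ i then
            ENNReal.ofReal (2*(k:ℝ)+1) * erealToENNReal (S.V {ω | (k:ℝ) ≤ |X ω|})
              * (((i:ℝ≥0∞)+1)^2)⁻¹ else 0))
          = ENNReal.ofReal (2*(k:ℝ)+1) * erealToENNReal (S.V {ω | (k:ℝ) ≤ |X ω|})
              * ∑' i : ℕ, (if k ≤ i then (((i:ℝ≥0∞)+1)^2)⁻¹ else 0) := by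
        rw [← ENNReal.tsum_mul_left]
        refine tsum_congr fun i => ?_
        split_ifs <;> simp
      rw [hfac]
      calc ENNReal.ofReal (2*(k:ℝ)+1) * erealToENNReal (S.V {ω | (k:ℝ) ≤ |X ω|})
            * (∑' i : ℕ, (if k ≤ i then (((i:ℝ≥0∞)+1)^2)⁻¹ else 0))
          ≤ ENNReal.ofReal (2*(k:ℝ)+1) * erealToENNReal (S.V {ω | (k:ℝ) ≤ |X ω|})
            * ((((k:ℝ≥0∞)+1)^2)⁻¹ + ENNReal.ofReal (((k:ℝ)+1)⁻¹)) :=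
            mul_le_mul_right (hA k) _
        _ = (ENNReal.ofReal (2*(k:ℝ)+1) *
              ((((k:ℝ≥0∞)+1)^2)⁻¹ + ENNReal.ofReal (((k:ℝ)+1)⁻¹)))
            * erealToENNReal (S.V {ω | (k:ℝ) ≤ |X ω|}) := by ring
        _ ≤ (if k = 0 then 2 else 3) * erealToENNReal (S.V {ω | (k:ℝ) ≤ |X ω|}) :=
            mul_le_mul_left (coeff_le k) _
    calc (∑' k : ℕ, ∑' i : ℕ, (if k ≤ i then
            ENNReal.ofReal (2*(k:ℝ)+1) * erealToENNReal (S.V {ω | (k:ℝ) ≤ |X ω|})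
              * (((i:ℝ≥0∞)+1)^2)⁻¹ else 0))
        ≤ ∑' k : ℕ, (if k = 0 then 2 else 3) * erealToENNReal (S.V {ω | (k:ℝ) ≤ |X ω|}) :=
          ENNReal.tsum_le_tsum hterm
      _ = (if (0:ℕ) = 0 then 2 else 3) * erealToENNReal (S.V {ω | ((0:ℕ):ℝ) ≤ |X ω|})
          + ∑' t : ℕ, (if t+1 = 0 then 2 else 3) *
              erealToENNReal (S.V {ω | ((t+1:ℕ):ℝ) ≤ |X ω|}) :=
          tsum_eq_zero_add' ENNReal.summable
      _ = 2 + 3 * ∑' t : ℕ, erealToENNReal (S.V {ω | ((t+1:ℕ):ℝ) ≤ |X ω|}) := by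
          rw [if_pos rfl, hw0, mul_one]
          have h3 : ∀ t : ℕ, (if t+1 = 0 then (2:ℝ≥0∞) else 3) *
              erealToENNReal (S.V {ω | ((t+1:ℕ):ℝ) ≤ |X ω|})
              = 3 * erealToENNReal (S.V {ω | ((t+1:ℕ):ℝ) ≤ |X ω|}) := fun t => by
            rw [if_neg (Nat.succ_ne_zero t)]
          rw [tsum_congr h3, ENNReal.tsum_mul_left]
      _ ≤ 2 + 3 * I := add_le_add le_rfl (mul_le_mul_right hwI _)
  refine ⟨main, lt_of_le_of_lt main ?_⟩
  refine ENNReal.add_lt_top.mpr ⟨?_, ?_⟩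
  · norm_num
  · exact ENNReal.mul_lt_top (by norm_num) (lt_top_iff_ne_top.mpr hIne)
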